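/- arXiv:2012.03859 — 4 statements merged into one kernel-verified Lean document; each statement's English description precedes it below -/
import Mathlib

section
/- For d = 2, the projection Π on the span of bistochastic maps preserves complete positivity: if |Ψ⟩ ∈ ℂ²⊗ℂ² is a unit vector with reduced states ρ₁ = Tr₂|Ψ⟩⟨Ψ| and ρ₂ = Tr₁|Ψ⟩⟨Ψ|, then the operator A = |Ψ⟩⟨Ψ| + (I⊗I)/2 − ρ₁⊗(I/2) − (I/2)⊗ρ₂ is positive semidefinite; indeed A = ½|Ψ⟩⟨Ψ| + ½|Ψ'⟩⟨Ψ'| where |Ψ'⟩ = √(1−p)|α₁⟩|β₁⟩ + √p|α₂⟩|β₂⟩ for the Schmidt decomposition |Ψ⟩ = √p|α₁⟩|β₁⟩ + √(1−p)|α₂⟩|β₂⟩. -/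
open Matrix Kronecker
open scoped ComplexOrder

lemma outer_psd {n : Type*} [Fintype n] [DecidableEq n] (v : n → ℂ) :
    (vecMulVec v (star v)).PosSemidef := by
  have h : vecMulVec v (star v) = replicateCol (Fin 1) v * (replicateCol (Fin 1) v)ᴴ := by
    rw [conjTranspose_replicateCol, vecMulVec_eq (Fin 1)]
    rfl
  rw [h]
  exact posSemidef_self_mul_conjTranspose _

lemma half_outer {n : Type*} [Fintype n] (v : n → ℂ) :
    ((1:ℂ)/2) • vecMulVec v (star v)
      = vecMulVec ((((Real.sqrt 2)⁻¹ : ℝ) : ℂ) • v)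
          (star ((((Real.sqrt 2)⁻¹ : ℝ) : ℂ) • v)) := by
  have h2 : ((Real.sqrt 2 : ℝ) : ℂ) * ((Real.sqrt 2 : ℝ) : ℂ) = 2 := by
    rw [← Complex.ofReal_mul, Real.mul_self_sqrt (by norm_num)]
    norm_num
  have h0 : ((Real.sqrt 2 : ℝ) : ℂ) ≠ 0 := by
    simp [Real.sqrt_ne_zero']
  ext i j
  simp only [vecMulVec_apply, Matrix.smul_apply, Pi.smul_apply, Pi.star_apply, smul_eq_mul,
    StarMul.star_mul, Complex.ofReal_inv, star_inv₀, RCLike.star_def, Complex.conj_ofReal]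
  have hinv : ((Real.sqrt 2 : ℝ) : ℂ)⁻¹ * ((Real.sqrt 2 : ℝ) : ℂ)⁻¹ = 1/2 := by
    rw [← mul_inv, h2]; norm_num
  linear_combination (-(v i * (starRingEnd ℂ) (v j))) * hinv

lemma row_orth (β : Fin 2 → Fin 2 → ℂ)
    (hβ : ∀ i j, ∑ k, star (β i k) * β j k = if i = j then 1 else 0) :
    ∀ i j, β i 0 * star (β j 0) + β i 1 * star (β j 1) = if i = j then 1 else 0 := by
  intro i j
  have h := congrArg star (hβ i j)
  simp only [Fin.sum_univ_two, star_add, StarMul.star_mul, star_star,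
    apply_ite (star : ℂ → ℂ), star_one, star_zero] at h
  linear_combination h

lemma col_orth (α : Fin 2 → Fin 2 → ℂ)
    (hα : ∀ i j, ∑ k, star (α i k) * α j k = if i = j then 1 else 0) :
    ∀ a c, α 0 a * star (α 0 c) + α 1 a * star (α 1 c) = if a = c then 1 else 0 := by
  set U : Matrix (Fin 2) (Fin 2) ℂ := Matrix.of α with hU
  have h1 : U * Uᴴ = 1 := by
    ext i j
    have := hα j i
    simp only [Fin.sum_univ_two] at this
    simp only [Matrix.mul_apply, Matrix.conjTranspose_apply, Fin.sum_univ_two, Matrix.one_apply, hU,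
      Matrix.of_apply]
    rw [show (if j = i then (1:ℂ) else 0) = (if i = j then 1 else 0) by simp [eq_comm]] at this
    linear_combination this
  have h2 : Uᴴ * U = 1 := mul_eq_one_comm.mp h1
  intro a c
  have h3 : (Uᴴ * U) a c = (1 : Matrix (Fin 2) (Fin 2) ℂ) a c := by rw [h2]
  have h4 := congrArg star h3
  simp only [Matrix.mul_apply, Matrix.conjTranspose_apply, Fin.sum_univ_two, Matrix.one_apply,
    star_add, StarMul.star_mul, star_star, apply_ite (star : ℂ → ℂ), star_one, star_zero, hU,
    Matrix.of_apply] at h4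
  linear_combination h4

theorem stmt_13 (p : ℝ) (hp : p ∈ Set.Icc (0 : ℝ) 1)
    (α β : Fin 2 → Fin 2 → ℂ)
    (hα : ∀ i j, ∑ k, star (α i k) * α j k = if i = j then 1 else 0)
    (hβ : ∀ i j, ∑ k, star (β i k) * β j k = if i = j then 1 else 0)
    (Ψ : Fin 2 × Fin 2 → ℂ)
    (hΨ : Ψ = fun q => (Real.sqrt p : ℂ) * α 0 q.1 * β 0 q.2
        + (Real.sqrt (1 - p) : ℂ) * α 1 q.1 * β 1 q.2) :
    let ρ₁ : Matrix (Fin 2) (Fin 2) ℂ :=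
      Matrix.of fun a b => ∑ k, Ψ (a, k) * star (Ψ (b, k))
    let ρ₂ : Matrix (Fin 2) (Fin 2) ℂ :=
      Matrix.of fun a b => ∑ k, Ψ (k, a) * star (Ψ (k, b))
    let A : Matrix (Fin 2 × Fin 2) (Fin 2 × Fin 2) ℂ :=
      vecMulVec Ψ (star Ψ) + ((1 : ℂ) / 2) • 1
        - ρ₁ ⊗ₖ (((1 : ℂ) / 2) • (1 : Matrix (Fin 2) (Fin 2) ℂ))
        - (((1 : ℂ) / 2) • (1 : Matrix (Fin 2) (Fin 2) ℂ)) ⊗ₖ ρ₂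
    let Ψ' : Fin 2 × Fin 2 → ℂ := fun q => (Real.sqrt (1 - p) : ℂ) * α 0 q.1 * β 0 q.2
        + (Real.sqrt p : ℂ) * α 1 q.1 * β 1 q.2
    A.PosSemidef ∧
      A = ((1 : ℂ) / 2) • vecMulVec Ψ (star Ψ)
          + ((1 : ℂ) / 2) • vecMulVec Ψ' (star Ψ') := by
  have hs : (Real.sqrt p : ℂ) * (Real.sqrt p : ℂ) = (p : ℂ) := by
    rw [← Complex.ofReal_mul, Real.mul_self_sqrt hp.1]
  have ht : (Real.sqrt (1 - p) : ℂ) * (Real.sqrt (1 - p) : ℂ) = 1 - (p : ℂ) := by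
    rw [← Complex.ofReal_mul, Real.mul_self_sqrt (by linarith [hp.2])]
    push_cast; ring
  have hbr := row_orth β hβ
  have har := row_orth α hα
  have hαc := col_orth α hα
  have hβc := col_orth β hβ
  have hb00 := hbr 0 0; have hb01 := hbr 0 1; have hb10 := hbr 1 0; have hb11 := hbr 1 1
  have ha00 := har 0 0; have ha01 := har 0 1; have ha10 := har 1 0; have ha11 := har 1 1
  norm_num at hb00 hb01 hb10 hb11 ha00 ha01 ha10 ha11
  have heq : vecMulVec Ψ (star Ψ) + ((1 : ℂ) / 2) • 1
        - (Matrix.of fun a b => ∑ k, Ψ (a, k) * star (Ψ (b, k))) ⊗ₖ (((1 : ℂ) / 2) • (1 : Matrix (Fin 2) (Fin 2) ℂ))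
        - (((1 : ℂ) / 2) • (1 : Matrix (Fin 2) (Fin 2) ℂ)) ⊗ₖ (Matrix.of fun a b => ∑ k, Ψ (k, a) * star (Ψ (k, b)))
      = ((1 : ℂ) / 2) • vecMulVec Ψ (star Ψ)
          + ((1 : ℂ) / 2) • vecMulVec (fun q => (Real.sqrt (1 - p) : ℂ) * α 0 q.1 * β 0 q.2
        + (Real.sqrt p : ℂ) * α 1 q.1 * β 1 q.2) (star (fun q => (Real.sqrt (1 - p) : ℂ) * α 0 q.1 * β 0 q.2
        + (Real.sqrt p : ℂ) * α 1 q.1 * β 1 q.2)) := by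
    ext ⟨a, b⟩ ⟨c, d⟩
    have hI : (if (a, b) = (c, d) then (1:ℂ) else 0)
        = (if a = c then (1:ℂ) else 0) * (if b = d then (1:ℂ) else 0) := by
      by_cases h1 : a = c <;> by_cases h2 : b = d <;> simp [Prod.ext_iff, h1, h2]
    have hac := hαc a c
    have hbd := hβc b d
    simp only [hΨ, Matrix.sub_apply, Matrix.add_apply, Matrix.smul_apply, Matrix.kroneckerMap_apply,
      Matrix.vecMulVec_apply, Matrix.of_apply, Matrix.one_apply, Pi.star_apply, Fin.sum_univ_two,
      smul_eq_mul, star_add, StarMul.star_mul, RCLike.star_def, map_add, _root_.map_mul,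
      Complex.conj_ofReal]
    rw [hI]
    simp only [RCLike.star_def] at hac hbd
    linear_combination
      (-(1/2) * (if b = d then (1:ℂ) else 0) * (Real.sqrt p : ℂ) * (Real.sqrt p : ℂ) * (α 0 a * (starRingEnd ℂ) (α 0 c))) * hb00
      + (-(1/2) * (if b = d then (1:ℂ) else 0) * (Real.sqrt p : ℂ) * (Real.sqrt (1-p) : ℂ) * (α 0 a * (starRingEnd ℂ) (α 1 c))) * hb01
      + (-(1/2) * (if b = d then (1:ℂ) else 0) * (Real.sqrt p : ℂ) * (Real.sqrt (1-p) : ℂ) * (α 1 a * (starRingEnd ℂ) (α 0 c))) * hb10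
      + (-(1/2) * (if b = d then (1:ℂ) else 0) * (Real.sqrt (1-p) : ℂ) * (Real.sqrt (1-p) : ℂ) * (α 1 a * (starRingEnd ℂ) (α 1 c))) * hb11
      + (-(1/2) * (if a = c then (1:ℂ) else 0) * (Real.sqrt p : ℂ) * (Real.sqrt p : ℂ) * (β 0 b * (starRingEnd ℂ) (β 0 d))) * ha00
      + (-(1/2) * (if a = c then (1:ℂ) else 0) * (Real.sqrt p : ℂ) * (Real.sqrt (1-p) : ℂ) * (β 0 b * (starRingEnd ℂ) (β 1 d))) * ha01
      + (-(1/2) * (if a = c then (1:ℂ) else 0) * (Real.sqrt p : ℂ) * (Real.sqrt (1-p) : ℂ) * (β 1 b * (starRingEnd ℂ) (β 0 d))) * ha10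
      + (-(1/2) * (if a = c then (1:ℂ) else 0) * (Real.sqrt (1-p) : ℂ) * (Real.sqrt (1-p) : ℂ) * (β 1 b * (starRingEnd ℂ) (β 1 d))) * ha11
      + (-(1/2) * (if b = d then (1:ℂ) else 0)
          + (1/2) * ((Real.sqrt p : ℂ) * (Real.sqrt p : ℂ) * (β 0 b * (starRingEnd ℂ) (β 0 d))
              + (Real.sqrt (1-p) : ℂ) * (Real.sqrt (1-p) : ℂ) * (β 1 b * (starRingEnd ℂ) (β 1 d)))) * hac
      + (-(1/2) * (α 0 a * (starRingEnd ℂ) (α 0 c) + α 1 a * (starRingEnd ℂ) (α 1 c))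
          + (1/2) * ((Real.sqrt p : ℂ) * (Real.sqrt p : ℂ) * (α 0 a * (starRingEnd ℂ) (α 0 c))
              + (Real.sqrt (1-p) : ℂ) * (Real.sqrt (1-p) : ℂ) * (α 1 a * (starRingEnd ℂ) (α 1 c)))) * hbd
      + (-(1/2) * (α 0 a * (starRingEnd ℂ) (α 0 c) + α 1 a * (starRingEnd ℂ) (α 1 c))
          * (β 0 b * (starRingEnd ℂ) (β 0 d) + β 1 b * (starRingEnd ℂ) (β 1 d))) * hs
      + (-(1/2) * (α 0 a * (starRingEnd ℂ) (α 0 c) + α 1 a * (starRingEnd ℂ) (α 1 c))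
          * (β 0 b * (starRingEnd ℂ) (β 0 d) + β 1 b * (starRingEnd ℂ) (β 1 d))) * ht
  intro ρ₁ ρ₂ A Ψ'
  have hA : A = ((1 : ℂ) / 2) • vecMulVec Ψ (star Ψ) + ((1 : ℂ) / 2) • vecMulVec Ψ' (star Ψ') :=
    heq
  refine ⟨?_, hA⟩
  rw [hA, half_outer, half_outer]
  exact (outer_psd _).add (outer_psd _)
end

section
/- For d > 2, the projection Π on the span of bistochastic maps fails to preserve positivity: there exists a classical channel C(ρ) = Σ_{x,y} p(y|x)|y⟩⟨y|⟨x|ρ|x⟩ on ℂᵈ such that ⟨1| Π(C)(|1⟩⟨1|) |1⟩ = −(d−2)/(2d) < 0, where Π(C)(ρ) = C(ρ) + Tr[ρ]·I/d − C(I)·Tr[ρ]/d (using that C is trace-preserving). -/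
open Matrix

theorem stmt_14 (d : ℕ) (hd : 2 < d) :
    let z : Fin d := ⟨0, by omega⟩
    -- conditional probabilities p(y|x)
    let pc : Fin d → Fin d → ℂ := fun y x =>
      if x = z then
        (if y = z then ((d : ℂ) - 2) / (2 * ((d : ℂ) - 1))
         else (1 / ((d : ℂ) - 1)) * (1 - ((d : ℂ) - 2) / (2 * ((d : ℂ) - 1))))
      else (if y = z then 1 else 0)
    -- the classical channel C(ρ) = Σ_{x,y} p(y|x) |y⟩⟨y| ⟨x|ρ|x⟩
    let C : Matrix (Fin d) (Fin d) ℂ → Matrix (Fin d) (Fin d) ℂ := fun ρ =>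
      Matrix.of fun y y' => if y = y' then ∑ x, pc y x * ρ x x else 0
    (C (Matrix.single z z 1) + ((1 : ℂ) / (d : ℂ)) • 1
        - ((1 : ℂ) / (d : ℂ)) • C 1) z z
      = -((d : ℂ) - 2) / (2 * (d : ℂ)) ∧
    -((d : ℝ) - 2) / (2 * (d : ℝ)) < 0 := by
  intro z pc C
  have hd0 : (d : ℂ) ≠ 0 := by exact_mod_cast (by omega : d ≠ 0)
  have hd1 : (d : ℂ) - 1 ≠ 0 := by
    have : (d : ℂ) ≠ 1 := by exact_mod_cast (by omega : d ≠ 1)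
    exact sub_ne_zero.mpr this
  constructor
  · have h1 : C (Matrix.single z z 1) z z = ((d : ℂ) - 2) / (2 * ((d : ℂ) - 1)) := by
      show (if z = z then ∑ x, pc z x * Matrix.single z z 1 x x else 0) = _
      rw [if_pos rfl, Finset.sum_eq_single z]
      · simp [pc, Matrix.single_apply_same]
      · intro b _ hb
        simp [Matrix.single, hb.symm]
      · simp
    have h2 : C 1 z z = ((d : ℂ) - 2) / (2 * ((d : ℂ) - 1)) + ((d : ℂ) - 1) := by
      show (if z = z then ∑ x, pc z x * (1 : Matrix (Fin d) (Fin d) ℂ) x x else 0) = _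
      rw [if_pos rfl]
      have : ∀ x : Fin d, pc z x * (1 : Matrix (Fin d) (Fin d) ℂ) x x
          = (if x = z then ((d : ℂ) - 2) / (2 * ((d : ℂ) - 1)) - 1 else 0) + 1 := by
        intro x
        by_cases hx : x = z <;> simp [pc, hx, Matrix.one_apply_eq]
      rw [Finset.sum_congr rfl fun x _ => this x, Finset.sum_add_distrib,
        Finset.sum_ite_eq' Finset.univ z]
      simp
      ring
    simp only [Matrix.sub_apply, Matrix.add_apply, Matrix.smul_apply, Matrix.one_apply_eq,
      h1, h2, smul_eq_mul]
    field_simp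
    ring
  · have hd' : (2 : ℝ) < (d : ℝ) := by exact_mod_cast hd
    have : (0:ℝ) < (d : ℝ) - 2 := by linarith
    apply div_neg_of_neg_of_pos <;> nlinarith
end

section
/- Let U, V be d×d unitaries and define S_U = U⊗|0⟩⟨0| + Uᵀ⊗|1⟩⟨1| and S_V = Vᵀ⊗|0⟩⟨0| + V⊗|1⟩⟨1| acting on ℂᵈ⊗ℂ². Then for any |ψ⟩ ∈ ℂᵈ, S_U S_V (|ψ⟩⊗|+⟩) = ((UVᵀ + UᵀV)/2 |ψ⟩)⊗|+⟩ + ((UVᵀ − UᵀV)/2 |ψ⟩)⊗|−⟩, where |±⟩ = (|0⟩±|1⟩)/√2. Consequently, if UVᵀ = UᵀV the output lies in ℂᵈ⊗span{|+⟩}, and if UVᵀ = −UᵀV it lies in ℂᵈ⊗span{|−⟩}. -/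
open Matrix Kronecker

lemma kron_mulVec {d : ℕ} (A : Matrix (Fin d) (Fin d) ℂ) (B : Matrix (Fin 2) (Fin 2) ℂ)
    (x : Fin d → ℂ) (y : Fin 2 → ℂ) (q : Fin d × Fin 2) :
    (A ⊗ₖ B).mulVec (fun p => x p.1 * y p.2) q = A.mulVec x q.1 * B.mulVec y q.2 := by
  simp only [mulVec, dotProduct, kroneckerMap_apply, Fintype.sum_prod_type]
  rw [Finset.sum_mul_sum]
  exact Finset.sum_congr rfl fun j _ => Finset.sum_congr rfl fun c _ => by ring

theorem stmt_16 (d : ℕ) (U V : Matrix (Fin d) (Fin d) ℂ)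
    (hU : U ∈ unitaryGroup (Fin d) ℂ) (hV : V ∈ unitaryGroup (Fin d) ℂ)
    (ψ : Fin d → ℂ) :
    let P0 : Matrix (Fin 2) (Fin 2) ℂ := Matrix.single 0 0 1
    let P1 : Matrix (Fin 2) (Fin 2) ℂ := Matrix.single 1 1 1
    let SU := U ⊗ₖ P0 + Uᵀ ⊗ₖ P1
    let SV := Vᵀ ⊗ₖ P0 + V ⊗ₖ P1
    let plus : Fin 2 → ℂ := fun _ => 1 / (Real.sqrt 2 : ℂ)
    let minus : Fin 2 → ℂ := fun b =>
      if b = 0 then 1 / (Real.sqrt 2 : ℂ) else -(1 / (Real.sqrt 2 : ℂ))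
    (SU * SV).mulVec (fun q => ψ q.1 * plus q.2)
      = (fun q => (((1 : ℂ) / 2) • (U * Vᵀ + Uᵀ * V)).mulVec ψ q.1 * plus q.2
          + (((1 : ℂ) / 2) • (U * Vᵀ - Uᵀ * V)).mulVec ψ q.1 * minus q.2) ∧
    (U * Vᵀ = Uᵀ * V →
      (SU * SV).mulVec (fun q => ψ q.1 * plus q.2)
        = fun q => (U * Vᵀ).mulVec ψ q.1 * plus q.2) ∧
    (U * Vᵀ = -(Uᵀ * V) →
      (SU * SV).mulVec (fun q => ψ q.1 * plus q.2)
        = fun q => (U * Vᵀ).mulVec ψ q.1 * minus q.2) := by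
  intro P0 P1 SU SV plus minus
  have hP00 : P0 * P0 = P0 := by
    ext i j; fin_cases i <;> fin_cases j <;> simp [P0, Matrix.mul_apply, Matrix.single, Fin.sum_univ_two]
  have hP11 : P1 * P1 = P1 := by
    ext i j; fin_cases i <;> fin_cases j <;> simp [P1, Matrix.mul_apply, Matrix.single, Fin.sum_univ_two]
  have hP01 : P0 * P1 = 0 := by
    ext i j; fin_cases i <;> fin_cases j <;> simp [P0, P1, Matrix.mul_apply, Matrix.single, Fin.sum_univ_two]
  have hP10 : P1 * P0 = 0 := by
    ext i j; fin_cases i <;> fin_cases j <;> simp [P0, P1, Matrix.mul_apply, Matrix.single, Fin.sum_univ_two]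
  have hmul : SU * SV = (U * Vᵀ) ⊗ₖ P0 + (Uᵀ * V) ⊗ₖ P1 := by
    simp only [SU, SV, Matrix.add_mul, Matrix.mul_add, ← Matrix.mul_kronecker_mul,
      hP00, hP11, hP01, hP10, Matrix.kronecker_zero, add_zero, zero_add]
  have hP0p : P0.mulVec plus = fun b => if b = 0 then (1 / (Real.sqrt 2 : ℂ)) else 0 := by
    funext b
    fin_cases b <;> simp [P0, mulVec, dotProduct, Fin.sum_univ_two, Matrix.single, plus]
  have hP1p : P1.mulVec plus = fun b => if b = 1 then (1 / (Real.sqrt 2 : ℂ)) else 0 := by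
    funext b
    fin_cases b <;> simp [P1, mulVec, dotProduct, Fin.sum_univ_two, Matrix.single, plus]
  have main : (SU * SV).mulVec (fun q => ψ q.1 * plus q.2)
      = (fun q => (((1 : ℂ) / 2) • (U * Vᵀ + Uᵀ * V)).mulVec ψ q.1 * plus q.2
          + (((1 : ℂ) / 2) • (U * Vᵀ - Uᵀ * V)).mulVec ψ q.1 * minus q.2) := by
    funext q
    obtain ⟨i, b⟩ := q
    rw [hmul, Matrix.add_mulVec]
    simp only [Pi.add_apply, kron_mulVec, hP0p, hP1p]
    simp only [smul_mulVec, add_mulVec, sub_mulVec, Pi.smul_apply, Pi.add_apply,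
      Pi.sub_apply, smul_eq_mul, plus, minus]
    fin_cases b <;> simp <;> ring
  refine ⟨main, fun h => ?_, fun h => ?_⟩
  · rw [main]
    funext q
    simp only [smul_mulVec, add_mulVec, sub_mulVec, Pi.smul_apply, Pi.add_apply,
      Pi.sub_apply, smul_eq_mul, ← h]
    ring
  · have h' : Uᵀ * V = -(U * Vᵀ) := by rw [h, neg_neg]
    rw [main]
    funext q
    simp only [h', smul_mulVec, add_mulVec, sub_mulVec, neg_mulVec, Pi.smul_apply,
      Pi.add_apply, Pi.sub_apply, Pi.neg_apply, smul_eq_mul]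
    ring
end

section
/- The operator F_C with Kraus operators Fᵢ = Cᵢ⊗|0⟩⟨0| + Cᵢᵀ⊗|1⟩⟨1| depends only on the channel C and not on the chosen Kraus representation: with V := I⊗I⊗|0⟩⟨0|⊗|0⟩⟨0| + SWAP⊗|1⟩⟨1|⊗|1⟩⟨1| suitably arranged, one has |Fᵢ⟩⟩ = V|Cᵢ⟩⟩ ⊗ appropriate control kets, hence Choi(F_C) = V·(Choi(C)⊗control)·V† is a function of Choi(C) alone. Concretely: for Kraus families {Cᵢ} and {Dⱼ} with Σᵢ|Cᵢ⟩⟩⟨⟨Cᵢ| = Σⱼ|Dⱼ⟩⟩⟨⟨Dⱼ|, it holds that Σᵢ Fᵢ ρ Fᵢ† = Σⱼ F'ⱼ ρ F'ⱼ† for all ρ, where Fᵢ = Cᵢ⊗|0⟩⟨0| + Cᵢᵀ⊗|1⟩⟨1| and F'ⱼ = Dⱼ⊗|0⟩⟨0| + Dⱼᵀ⊗|1⟩⟨1|. -/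
open Matrix Kronecker

private def fidx (d : ℕ) (s : Fin 2) (x u : Fin d) : Fin d × Fin d :=
  if s = 0 then (x, u) else (u, x)

private lemma key (d : ℕ) (E : Matrix (Fin d) (Fin d) ℂ)
    (ρ : Matrix (Fin d × Fin 2) (Fin d × Fin 2) ℂ) (x y : Fin d) (s t : Fin 2) :
    ((E ⊗ₖ (single 0 0 1 : Matrix (Fin 2) (Fin 2) ℂ)
      + Eᵀ ⊗ₖ (single 1 1 1 : Matrix (Fin 2) (Fin 2) ℂ)) * ρ
      * (E ⊗ₖ (single 0 0 1 : Matrix (Fin 2) (Fin 2) ℂ)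
      + Eᵀ ⊗ₖ (single 1 1 1 : Matrix (Fin 2) (Fin 2) ℂ))ᴴ) (x, s) (y, t)
    = ∑ u, ∑ v, (E (fidx d s x u).1 (fidx d s x u).2
        * star (E (fidx d t y v).1 (fidx d t y v).2)) * ρ (u, s) (v, t) := by
  fin_cases s <;> fin_cases t <;>
    simp [Matrix.mul_apply, Matrix.conjTranspose_apply, Fintype.sum_prod_type,
      Fin.sum_univ_two, fidx, Matrix.kroneckerMap_apply, Matrix.single_apply_same,
      Matrix.single, Matrix.transpose_apply, mul_comm, mul_assoc, mul_left_comm] <;>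
    (simp_rw [Finset.mul_sum]; rw [Finset.sum_comm];
     exact Finset.sum_congr rfl fun u _ => Finset.sum_congr rfl fun v _ => by ring)

/-- The time-flipped channel depends only on the Choi operator of the input channel,
not on the chosen Kraus representation. -/
theorem stmt_17 (d : ℕ) (ι κ : Type) [Fintype ι] [Fintype κ]
    (C : ι → Matrix (Fin d) (Fin d) ℂ) (D : κ → Matrix (Fin d) (Fin d) ℂ)
    (hChoi : ∑ i, vecMulVec (fun p : Fin d × Fin d => C i p.1 p.2)
                (star fun p : Fin d × Fin d => C i p.1 p.2)
        = ∑ j, vecMulVec (fun p : Fin d × Fin d => D j p.1 p.2)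
                (star fun p : Fin d × Fin d => D j p.1 p.2)) :
    let P0 : Matrix (Fin 2) (Fin 2) ℂ := single 0 0 1
    let P1 : Matrix (Fin 2) (Fin 2) ℂ := single 1 1 1
    ∀ ρ : Matrix (Fin d × Fin 2) (Fin d × Fin 2) ℂ,
      ∑ i, (C i ⊗ₖ P0 + (C i)ᵀ ⊗ₖ P1) * ρ * (C i ⊗ₖ P0 + (C i)ᵀ ⊗ₖ P1)ᴴ
        = ∑ j, (D j ⊗ₖ P0 + (D j)ᵀ ⊗ₖ P1) * ρ * (D j ⊗ₖ P0 + (D j)ᵀ ⊗ₖ P1)ᴴ := by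
  have h : ∀ p q : Fin d × Fin d,
      ∑ i, C i p.1 p.2 * star (C i q.1 q.2) = ∑ j, D j p.1 p.2 * star (D j q.1 q.2) := by
    intro p q
    have := congrFun (congrFun hChoi p) q
    simpa [Matrix.sum_apply, Matrix.vecMulVec_apply] using this
  intro P0 P1 ρ
  ext ⟨x, s⟩ ⟨y, t⟩
  simp only [Matrix.sum_apply, P0, P1, key]
  conv_lhs => rw [Finset.sum_comm]
  conv_rhs => rw [Finset.sum_comm]
  refine Finset.sum_congr rfl fun u _ => ?_
  conv_lhs => rw [Finset.sum_comm]
  conv_rhs => rw [Finset.sum_comm]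
  refine Finset.sum_congr rfl fun v _ => ?_
  rw [← Finset.sum_mul, ← Finset.sum_mul, h]
end
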